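/- The inequality (1−p)·x/(sinh x) + p·x/(tanh x) > 1 holds for all x > 0 if and only if p ≥ 1/3, and the inequality 1 > (1−q)·x/(sinh x) + q·x/(tanh x) holds for all x > 0 if and only if q ≤ 0. -/

import Mathlib

open Real Set

private lemma pos_of_deriv (f f' : ℝ → ℝ) (hf : ∀ y, HasDerivAt f (f' y) y)
    (h0 : f 0 = 0) (hpos : ∀ y, 0 < y → 0 < f' y) :
    ∀ x, 0 < x → 0 < f x := by
  intro x hx
  have hm : StrictMonoOn f (Set.Ici 0) :=
    strictMonoOn_of_deriv_pos (convex_Ici 0)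
      (fun y _ => (hf y).continuousAt.continuousWithinAt)
      (fun y hy => by
        rw [(hf y).deriv]
        exact hpos y (by simpa [interior_Ici] using hy))
  have := hm Set.self_mem_Ici (Set.mem_Ici.2 hx.le) hx
  simpa [h0] using this

private lemma pos_of_deriv_Icc (f f' : ℝ → ℝ) (hf : ∀ y, HasDerivAt f (f' y) y)
    (h0 : f 0 = 0) (hpos : ∀ y, 0 < y → y < 1 → 0 < f' y) :
    ∀ x, 0 < x → x ≤ 1 → 0 < f x := by
  intro x hx hx1
  have hm : StrictMonoOn f (Set.Icc 0 1) :=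
    strictMonoOn_of_deriv_pos (convex_Icc 0 1)
      (fun y _ => (hf y).continuousAt.continuousWithinAt)
      (fun y hy => by
        rw [(hf y).deriv]
        rw [interior_Icc, Set.mem_Ioo] at hy
        exact hpos y hy.1 hy.2)
  have := hm (Set.mem_Icc.2 ⟨le_rfl, zero_le_one⟩) (Set.mem_Icc.2 ⟨hx.le, hx1⟩) hx
  simpa [h0] using this

private lemma L1 : ∀ x : ℝ, 0 < x → Real.sinh x < x * Real.cosh x := by
  have h := pos_of_deriv (fun y => y * Real.cosh y - Real.sinh y) (fun y => y * Real.sinh y)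
    (fun y => by
      have := (((hasDerivAt_id' y)).mul (Real.hasDerivAt_cosh y)).sub (Real.hasDerivAt_sinh y)
      refine this.congr_deriv ?_
      ring)
    (by simp) (fun y hy => mul_pos hy (Real.sinh_pos_iff.2 hy))
  intro x hx
  have hh : 0 < x * Real.cosh x - Real.sinh x := h x hx
  linarith

private lemma L2 : ∀ x : ℝ, 0 < x → 0 < 2 + x * Real.sinh x - 2 * Real.cosh x := by
  exact pos_of_deriv (fun y => 2 + y * Real.sinh y - 2 * Real.cosh y)
    (fun y => y * Real.cosh y - Real.sinh y)
    (fun y => by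
      have := ((hasDerivAt_const y (2:ℝ)).add (((hasDerivAt_id' y)).mul (Real.hasDerivAt_sinh y))).sub
        ((hasDerivAt_const y (2:ℝ)).mul (Real.hasDerivAt_cosh y))
      refine this.congr_deriv ?_
      ring)
    (by simp) (fun y hy => show (0:ℝ) < y * Real.cosh y - Real.sinh y by linarith [L1 y hy])

private lemma L3 : ∀ x : ℝ, 0 < x → 3 * Real.sinh x < x * (2 + Real.cosh x) := by
  have h := pos_of_deriv (fun y => y * (2 + Real.cosh y) - 3 * Real.sinh y)
    (fun y => 2 + y * Real.sinh y - 2 * Real.cosh y)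
    (fun y => by
      have := (((hasDerivAt_id' y)).mul ((hasDerivAt_const y (2:ℝ)).add (Real.hasDerivAt_cosh y))).sub
        ((hasDerivAt_const y (3:ℝ)).mul (Real.hasDerivAt_sinh y))
      refine this.congr_deriv ?_
      simp only [Pi.add_apply]
      ring)
    (by simp) (fun y hy => show (0:ℝ) < 2 + y * Real.sinh y - 2 * Real.cosh y from L2 y hy)
  intro x hx
  have hh : 0 < x * (2 + Real.cosh x) - 3 * Real.sinh x := h x hx
  linarith

private lemma L5 : ∀ x : ℝ, 0 < x → 1 + x ^ 2 / 2 < Real.cosh x := by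
  have h := pos_of_deriv (fun y => Real.cosh y - 1 - y ^ 2 / 2) (fun y => Real.sinh y - y)
    (fun y => by
      have := ((Real.hasDerivAt_cosh y).sub (hasDerivAt_const y (1:ℝ))).sub
        ((hasDerivAt_pow 2 y).div_const 2)
      refine this.congr_deriv ?_
      ring)
    (by simp) (fun y hy => show (0:ℝ) < Real.sinh y - y by linarith [Real.self_lt_sinh_iff.2 hy])
  intro x hx
  have hh : 0 < Real.cosh x - 1 - x ^ 2 / 2 := h x hx
  linarith

private lemma L4 : ∀ x : ℝ, 0 < x → x + x ^ 3 / 6 < Real.sinh x := by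
  have h := pos_of_deriv (fun y => Real.sinh y - y - y ^ 3 / 6)
    (fun y => Real.cosh y - 1 - y ^ 2 / 2)
    (fun y => by
      have := ((Real.hasDerivAt_sinh y).sub ((hasDerivAt_id' y))).sub
        ((hasDerivAt_pow 3 y).div_const 6)
      refine this.congr_deriv ?_
      try push_cast
      try ring)
    (by simp) (fun y hy => show (0:ℝ) < Real.cosh y - 1 - y ^ 2 / 2 by linarith [L5 y hy])
  intro x hx
  have hh : 0 < Real.sinh x - x - x ^ 3 / 6 := h x hx
  linarith

private lemma cosh_one_lt_two : Real.cosh 1 < 2 := by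
  rw [Real.cosh_eq]
  have h1 : Real.exp 1 < 2.7182818286 := Real.exp_one_lt_d9
  have h2 : Real.exp (-1) < 1 := Real.exp_lt_one_iff.2 (by norm_num)
  norm_num at h1 ⊢
  linarith

private lemma L6 : ∀ x : ℝ, 0 < x → x ≤ 1 → Real.cosh x < 1 + x ^ 2 := by
  have h := pos_of_deriv_Icc (fun y => 1 + y ^ 2 - Real.cosh y) (fun y => 2 * y - Real.sinh y)
    (fun y => by
      have := ((hasDerivAt_const y (1:ℝ)).add (hasDerivAt_pow 2 y)).sub (Real.hasDerivAt_cosh y)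
      refine this.congr_deriv ?_
      try push_cast
      try ring)
    (by simp)
    (fun y hy hy1 => by
      have h1 := L1 y hy
      have h2 : Real.cosh y ≤ Real.cosh 1 := by
        rw [Real.cosh_le_cosh]
        rw [abs_of_pos hy, abs_one]
        linarith
      have := cosh_one_lt_two
      show (0:ℝ) < 2 * y - Real.sinh y
      nlinarith)
  intro x hx hx1
  have hh : 0 < 1 + x ^ 2 - Real.cosh x := h x hx hx1
  linarith

private lemma L7 : ∀ x : ℝ, 0 < x → x ≤ 1 → Real.sinh x < x + x ^ 3 := by
  have h := pos_of_deriv_Icc (fun y => y + y ^ 3 - Real.sinh y)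
    (fun y => 1 + 3 * y ^ 2 - Real.cosh y)
    (fun y => by
      have := (((hasDerivAt_id' y)).add (hasDerivAt_pow 3 y)).sub (Real.hasDerivAt_sinh y)
      refine this.congr_deriv ?_
      try push_cast
      try ring)
    (by simp)
    (fun y hy hy1 => by
      have := L6 y hy hy1.le
      show (0:ℝ) < 1 + 3 * y ^ 2 - Real.cosh y
      nlinarith)
  intro x hx hx1
  have hh : 0 < x + x ^ 3 - Real.sinh x := h x hx hx1
  linarith

private lemma L8 : ∀ x : ℝ, 0 < x → x ≤ 1 → Real.cosh x < 1 + x ^ 2 / 2 + x ^ 4 := by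
  have h := pos_of_deriv_Icc (fun y => 1 + y ^ 2 / 2 + y ^ 4 - Real.cosh y)
    (fun y => y + 4 * y ^ 3 - Real.sinh y)
    (fun y => by
      have := (((hasDerivAt_const y (1:ℝ)).add ((hasDerivAt_pow 2 y).div_const 2)).add
        (hasDerivAt_pow 4 y)).sub (Real.hasDerivAt_cosh y)
      refine this.congr_deriv ?_
      try push_cast
      try ring)
    (by simp)
    (fun y hy hy1 => by
      have := L7 y hy hy1.le
      show (0:ℝ) < y + 4 * y ^ 3 - Real.sinh y
      nlinarith [pow_pos hy 3])
  intro x hx hx1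
  have hh : 0 < 1 + x ^ 2 / 2 + x ^ 4 - Real.cosh x := h x hx hx1
  linarith

private lemma sinh_lt_cosh' (x : ℝ) : Real.sinh x < Real.cosh x := by
  rw [Real.sinh_eq, Real.cosh_eq]
  have := Real.exp_pos (-x)
  linarith

private lemma expr_eq (r x : ℝ) (hx : 0 < x) :
    (1 - r) * x / Real.sinh x + r * x / Real.tanh x
      = ((1 - r) * x + r * x * Real.cosh x) / Real.sinh x := by
  rw [Real.tanh_eq_sinh_div_cosh]
  have hS : Real.sinh x ≠ 0 := (Real.sinh_pos_iff.2 hx).ne'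
  have hC : Real.cosh x ≠ 0 := (Real.cosh_pos x).ne'
  field_simp
  try ring

theorem huygens_type_hyperbolic_reciprocal (p q : ℝ) :
    ((∀ x : ℝ, 0 < x →
      (1 - p) * x / Real.sinh x + p * x / Real.tanh x > 1) ↔ p ≥ 1 / 3) ∧
    ((∀ x : ℝ, 0 < x →
      1 > (1 - q) * x / Real.sinh x + q * x / Real.tanh x) ↔ q ≤ 0) := by
  constructor
  · constructor
    · intro h
      by_contra hp
      push_neg at hp
      rcases le_or_gt p 0 with hp0 | hp0
      · have h1 := h 1 one_pos
        rw [expr_eq p 1 one_pos] at h1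
        have hS : (0:ℝ) < Real.sinh 1 := Real.sinh_pos_iff.2 one_pos
        rw [gt_iff_lt, lt_div_iff₀ hS] at h1
        have hs := Real.self_lt_sinh_iff.2 one_pos
        have hc : (1:ℝ) < Real.cosh 1 := Real.one_lt_cosh.2 one_ne_zero
        nlinarith [mul_nonneg (neg_nonneg.2 hp0) (by linarith : (0:ℝ) ≤ Real.cosh 1 - 1)]
      · have hcpos : 0 < (1 - 3 * p) / (6 * p) := div_pos (by linarith) (by linarith)
        obtain ⟨x, hxpos, hx1, hx2⟩ :
            ∃ x : ℝ, 0 < x ∧ x ≤ 1 ∧ x ^ 2 ≤ (1 - 3 * p) / (6 * p) := by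
          refine ⟨min 1 (Real.sqrt ((1 - 3 * p) / (6 * p))),
            lt_min one_pos (Real.sqrt_pos.2 hcpos), min_le_left _ _, ?_⟩
          have h1 : min 1 (Real.sqrt ((1 - 3 * p) / (6 * p)))
              ≤ Real.sqrt ((1 - 3 * p) / (6 * p)) := min_le_right _ _
          have h2 : 0 < min 1 (Real.sqrt ((1 - 3 * p) / (6 * p))) :=
            lt_min one_pos (Real.sqrt_pos.2 hcpos)
          nlinarith [Real.sq_sqrt hcpos.le]
        have hpx2 : 6 * (p * x ^ 2) ≤ 1 - 3 * p := by
          rw [le_div_iff₀ (by linarith : (0:ℝ) < 6 * p)] at hx2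
          nlinarith
        have h4 := L4 x hxpos
        have h8 := L8 x hxpos hx1
        -- sinh x > x + x^3/6 ≥ x + p x^3/2 + p x^5 > x + p x (cosh x - 1)
        have hkey : (1 - p) * x + p * x * Real.cosh x < Real.sinh x := by
          have hA : p * x * (Real.cosh x - 1) < p * x * (x ^ 2 / 2 + x ^ 4) :=
            mul_lt_mul_of_pos_left (by linarith) (mul_pos hp0 hxpos)
          have hB : p * x * (x ^ 2 / 2 + x ^ 4) ≤ x ^ 3 / 6 := by
            nlinarith [mul_le_mul_of_nonneg_right hpx2 (pow_pos hxpos 3).le]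
          nlinarith
        have h1 := h x hxpos
        rw [expr_eq p x hxpos] at h1
        have hS : (0:ℝ) < Real.sinh x := Real.sinh_pos_iff.2 hxpos
        rw [gt_iff_lt, lt_div_iff₀ hS] at h1
        linarith
    · intro hp x hx
      rw [expr_eq p x hx]
      have hS : (0:ℝ) < Real.sinh x := Real.sinh_pos_iff.2 hx
      rw [gt_iff_lt, lt_div_iff₀ hS]
      have h3 := L3 x hx
      have hc : (1:ℝ) < Real.cosh x := Real.one_lt_cosh.2 hx.ne'
      have hfact : 0 ≤ (p - 1/3) * (x * (Real.cosh x - 1)) :=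
        mul_nonneg (by linarith) (mul_nonneg hx.le (by linarith))
      nlinarith
  · constructor
    · intro h
      by_contra hq
      push_neg at hq
      set x : ℝ := max 1 (1 / q) with hxdef
      have hx1 : (1:ℝ) ≤ x := le_max_left _ _
      have hxpos : 0 < x := lt_of_lt_of_le one_pos hx1
      have h1 := h x hxpos
      rw [expr_eq q x hxpos] at h1
      have hS : (0:ℝ) < Real.sinh x := Real.sinh_pos_iff.2 hxpos
      rw [gt_iff_lt, div_lt_iff₀ hS] at h1
      have hL1 := L1 x hxpos
      have hsc := sinh_lt_cosh' x
      have hc : (1:ℝ) < Real.cosh x := Real.one_lt_cosh.2 hxpos.ne'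
      rcases le_or_gt q 1 with hq1 | hq1
      · have hx2 : 1 / q ≤ x := le_max_right _ _
        have hqx : 1 ≤ q * x := by
          rw [div_le_iff₀ hq] at hx2
          linarith
        have : Real.cosh x ≤ q * x * Real.cosh x := by
          nlinarith [Real.cosh_pos x]
        nlinarith [mul_nonneg (by linarith : (0:ℝ) ≤ 1 - q) hxpos.le]
      · have hfact : 0 ≤ (q - 1) * (x * (Real.cosh x - 1)) :=
          mul_nonneg (by linarith) (mul_nonneg hxpos.le (by linarith))
        nlinarith
    · intro hq x hx
      rw [expr_eq q x hx]
      have hS : (0:ℝ) < Real.sinh x := Real.sinh_pos_iff.2 hx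
      rw [gt_iff_lt, div_lt_iff₀ hS]
      have hs := Real.self_lt_sinh_iff.2 hx
      have hc : (1:ℝ) < Real.cosh x := Real.one_lt_cosh.2 hx.ne'
      have hfact : 0 ≤ (-q) * (x * (Real.cosh x - 1)) :=
        mul_nonneg (by linarith) (mul_nonneg hx.le (by linarith))
      nlinarith
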